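/- arXiv:1811.06459 — 3 statements merged into one kernel-verified Lean document; each statement's English description precedes it below -/
import Mathlib

section
/- Łoś–Tarski theorem (the case k = 0 of GLT(k)): let τ be a finite first-order vocabulary, V an FO(τ) theory, and φ an FO(τ) sentence. Then φ is preserved under substructures modulo V (i.e., whenever a τ-structure 𝔄 satisfies V ∪ {φ} and 𝔅 is a substructure of 𝔄 satisfying V, then 𝔅 satisfies φ) if and only if φ is equivalent modulo V to a universal sentence, i.e., a prenex sentence ∀y₁…∀y_n ψ with ψ quantifier-free. (All structures here are arbitrary, possibly infinite.) -/
open FirstOrder Language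

universe u v w

namespace GLTPaper

variable {L : FirstOrder.Language.{u, v}}

/-- A sentence `φ` is preserved under substructures modulo a theory `V` if whenever a
(nonempty) structure `M` satisfies `V ∪ {φ}` and `N` is a (nonempty) substructure of `M`
satisfying `V`, then `N` satisfies `φ`. -/
def PreservedUnderSubstructuresModulo (V : L.Theory) (φ : L.Sentence) : Prop :=
  ∀ (M : Type w) [L.Structure M] [Nonempty M], M ⊨ V → M ⊨ φ →
    ∀ N : L.Substructure M, (N : Set M).Nonempty → (N : Type w) ⊨ V → (N : Type w) ⊨ φ

open Language.Structure BoundedFormula Cardinal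

universe u' v'



section QFCast
variable {α : Type*} {M : Type*} [L.Structure M]

lemma isQF_realize_castLE {m n : ℕ} (h : m ≤ n)
    {χ : L.BoundedFormula α m} (hχ : χ.IsQF) (v : α → M) (xs : Fin n → M) :
    (χ.castLE h).Realize v xs ↔ χ.Realize v (xs ∘ Fin.castLE h) := by
  have hc : ∀ (t : L.Term (α ⊕ Fin m)),
      (t.relabel (Sum.map id (Fin.castLE h))).realize (Sum.elim v xs)
        = t.realize (Sum.elim v (xs ∘ Fin.castLE h)) := by
    intro t
    rw [Term.realize_relabel]
    congr 1
    funext a; cases a <;> rfl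
  induction hχ with
  | falsum => rfl
  | of_isAtomic hA =>
    cases hA with
    | equal t₁ t₂ => simp only [Term.bdEqual, castLE, Realize, hc]
    | rel R ts => simp only [Relations.boundedFormula, castLE, Realize, Function.comp_apply, hc]
  | imp _ _ ih₁ ih₂ => simp only [castLE, realize_imp, ih₁, ih₂]

lemma models_alls_castLE {M : Type*} [L.Structure M] [Nonempty M] {m n : ℕ} (h : m ≤ n)
    {χ : L.BoundedFormula Empty m} (hχ : χ.IsQF) :
    M ⊨ (χ.castLE h).alls ↔ M ⊨ χ.alls := by
  simp only [Sentence.Realize, realize_alls]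
  constructor
  · intro H ys
    obtain ⟨a⟩ := ‹Nonempty M›
    have := H (fun i => if hi : (i : ℕ) < m then ys ⟨i, hi⟩ else a)
    rw [isQF_realize_castLE h hχ] at this
    convert this using 2
    funext i
    simp [Fin.castLE]
  · intro H xs
    rw [isQF_realize_castLE h hχ]
    exact H _

end QFCast


section Conj
variable {α : Type*}

lemma foldr_inf_isQF (l : List (L.Formula α)) (h : ∀ ρ ∈ l, ρ.IsQF) :
    (l.foldr (· ⊓ ·) ⊤).IsQF := by
  induction l with
  | nil => exact IsQF.top
  | cons a l ih =>
    exact (h a List.mem_cons_self).inf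
      (ih fun ρ hρ => h ρ (List.mem_cons_of_mem a hρ))

lemma foldr_inf_realize {M : Type*} [L.Structure M] (l : List (L.Formula α)) (v : α → M) :
    (l.foldr (· ⊓ ·) ⊤).Realize v ↔ ∀ ρ ∈ l, ρ.Realize v := by
  induction l with
  | nil => simp
  | cons a l ih => simp [Formula.realize_inf, ih]

/-- Combine a finite set of universal sentences into a single universal sentence. -/
lemma exists_universal_conj (s : Finset L.Sentence)
    (hs : ∀ θ ∈ s, ∃ (n : ℕ) (χ : L.BoundedFormula Empty n), χ.IsQF ∧ θ = χ.alls) :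
    ∃ (n : ℕ) (χ : L.BoundedFormula Empty n), χ.IsQF ∧
      ∀ (M : Type*) [L.Structure M] [Nonempty M], (M ⊨ χ.alls ↔ ∀ θ ∈ s, M ⊨ θ) := by
  classical
  induction s using Finset.induction with
  | empty =>
    refine ⟨0, BoundedFormula.not ⊥, isQF_bot.not, fun M _ _ => ?_⟩
    simp only [Finset.notMem_empty, false_implies, implies_true, iff_true]
    simp [alls, Sentence.Realize]
  | @insert θ s hθ ih =>
    obtain ⟨n₁, χ₁, h₁, rfl⟩ := hs θ (s.mem_insert_self θ)
    obtain ⟨n₂, χ₂, h₂, hiff⟩ := ih fun ρ hρ => hs ρ (Finset.mem_insert_of_mem hρ)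
    refine ⟨max n₁ n₂, (χ₁.castLE (le_max_left _ _)) ⊓ (χ₂.castLE (le_max_right _ _)),
      (h₁.castLE).inf (h₂.castLE), fun M _ _ => ?_⟩
    have key : M ⊨ ((χ₁.castLE (le_max_left n₁ n₂)) ⊓ (χ₂.castLE (le_max_right n₁ n₂))).alls
        ↔ M ⊨ (χ₁.castLE (le_max_left n₁ n₂)).alls ∧ M ⊨ (χ₂.castLE (le_max_right n₁ n₂)).alls := by
      simp only [Sentence.Realize, realize_alls, realize_inf, forall_and]
    rw [key, models_alls_castLE _ h₁, models_alls_castLE _ h₂, hiff M]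
    simp only [Finset.mem_insert]
    constructor
    · rintro ⟨hθ1, hs1⟩ ρ (rfl | hρ)
      · exact hθ1
      · exact hs1 ρ hρ
    · intro H
      exact ⟨H _ (Or.inl rfl), fun ρ hρ => H ρ (Or.inr hρ)⟩

end Conj

/-- Realization of a formula only depends on values at its free variables. -/
lemma formula_realize_congr {α : Type*} [DecidableEq α] {M : Type*} [L.Structure M]
    {θ : L.Formula α} {v₁ v₂ : α → M} (h : ∀ a ∈ θ.freeVarFinset, v₁ a = v₂ a) :
    θ.Realize v₁ ↔ θ.Realize v₂ := by
  rw [Formula.Realize, Formula.Realize,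
    ← realize_restrictFreeVar' (φ := θ) (s := (↑θ.freeVarFinset : Set α)) subset_rfl (v := v₁),
    ← realize_restrictFreeVar' (φ := θ) (s := (↑θ.freeVarFinset : Set α)) subset_rfl (v := v₂)]
  have hv : v₁ ∘ (Subtype.val : {a : α // a ∈ (↑θ.freeVarFinset : Set α)} → α)
      = v₂ ∘ (Subtype.val : {a : α // a ∈ (↑θ.freeVarFinset : Set α)} → α) :=
    funext fun a => h a a.2
  exact iff_of_eq (congrArg₂ (fun w xs => BoundedFormula.Realize _ w xs) hv rfl)

/-- Downward transfer: a satisfiable theory over a countable language has a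
countable nonempty model in any universe. -/
lemma exists_model_in_universe {L' : FirstOrder.Language.{u', v'}} (hc : L'.card ≤ ℵ₀)
    {T : L'.Theory} (hT : T.IsSatisfiable) :
    ∃ (M : Type w) (_ : L'.Structure M) (_ : Nonempty M), Countable M ∧ M ⊨ T := by
  obtain ⟨M0⟩ := hT
  cases finite_or_infinite (M0 : Type (max u' v')) with
  | inl hfin =>
    obtain ⟨n, ⟨e⟩⟩ := Finite.exists_equiv_fin M0
    let e2 : M0 ≃ ULift.{w} (Fin n) := e.trans Equiv.ulift.symm
    letI : L'.Structure (ULift.{w} (Fin n)) := e2.inducedStructure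
    have g := e2.inducedStructureEquiv (L := L')
    haveI : Nonempty (ULift.{w} (Fin n)) := Nonempty.map e2 inferInstance
    haveI : (ULift.{w} (Fin n)) ⊨ T := StrongHomClass.theory_model g
    exact ⟨ULift.{w} (Fin n), _, inferInstance, inferInstance, inferInstance⟩
  | inr hinf =>
    obtain ⟨N, ⟨emb⟩, hcard⟩ := exists_elementaryEmbedding_card_eq_of_le L' M0
      (ℵ₀ : Cardinal.{w}) le_rfl
      (by simpa using hc)
      (by simpa using aleph0_le_mk M0)
    haveI : Nonempty N := by
      rw [← mk_ne_zero_iff, hcard]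
      exact aleph0_ne_zero
    haveI : Countable N := by
      rw [← mk_le_aleph0_iff, hcard]
    haveI : (N : Type w) ⊨ T := (emb.theory_model_iff T).2 inferInstance
    exact ⟨N, N.str, inferInstance, inferInstance, inferInstance⟩



lemma realize_relabel_alls {β : Type*} (θ : L.Formula β) (nn : ℕ) (idx : β → Fin nn)
    (M : Type*) [L.Structure M] [Nonempty M] :
    M ⊨ (BoundedFormula.relabel (fun b => Sum.inr (idx b) : β → Empty ⊕ Fin nn) θ.not).alls ↔
      ∀ xs : Fin (nn + 0) → M,
        ¬ BoundedFormula.Realize θ (fun b => xs (Fin.castAdd 0 (idx b))) (default : Fin 0 → M) := by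
  rw [Sentence.Realize]
  simp only [realize_alls, realize_relabel, realize_not]
  refine forall_congr' fun xs => not_congr ?_
  have h1 : (Sum.elim (default : Empty → M) (xs ∘ Fin.castAdd 0) ∘
      (fun b => Sum.inr (idx b) : β → Empty ⊕ Fin nn)) = fun b => xs (Fin.castAdd 0 (idx b)) := by
    funext b; simp
  have h2 : (xs ∘ Fin.natAdd nn) = (default : Fin 0 → M) := Subsingleton.elim _ _
  rw [h1, h2]

/-- **Łoś–Tarski theorem** (the case `k = 0` of `GLT(k)`): over arbitrary structures, a
sentence `φ` is preserved under substructures modulo a theory `V` iff it is equivalent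
modulo `V` to a universal sentence `∀y₁…∀y_n ψ` with `ψ` quantifier-free. -/
theorem los_tarski (hfin : Finite L.Symbols) (V : L.Theory) (φ : L.Sentence) :
    PreservedUnderSubstructuresModulo.{u, v, w} V φ ↔
      ∃ (n : ℕ) (ψ : L.BoundedFormula Empty n), ψ.IsQF ∧
        ∀ (M : Type w) [L.Structure M] [Nonempty M], M ⊨ V →
          (M ⊨ φ ↔ M ⊨ ψ.alls) := by
  classical
  constructor
  · intro P
    -- the set of universal consequences of V ∪ {φ}
    set Ψ : L.Theory := {θ | (∃ (n : ℕ) (χ : L.BoundedFormula Empty n), χ.IsQF ∧ θ = χ.alls) ∧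
        Theory.ModelsBoundedFormula.{u, v, 0} (V ∪ {φ}) θ} with hΨdef
    have hLcard : L.card ≤ ℵ₀ := by
      have : Countable L.Symbols := Finite.to_countable
      exact mk_le_aleph0
    have step1 : Theory.ModelsBoundedFormula.{u, v, 0} (V ∪ Ψ) φ := by
      rw [Theory.models_iff_not_satisfiable]
      intro hsat
      obtain ⟨B, iB, neB, cntB, hBmod⟩ := exists_model_in_universe.{w} hLcard hsat
      haveI : B ⊨ (V ∪ Ψ ∪ {Formula.not φ} : L.Theory) := hBmod
      have hBV : B ⊨ V :=
        hBmod.mono (Set.Subset.trans Set.subset_union_left Set.subset_union_left)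
      have hBΨ : ∀ θ ∈ Ψ, B ⊨ θ := fun θ hθ =>
        Theory.realize_sentence_of_mem (V ∪ Ψ ∪ {Formula.not φ})
          (Set.mem_union_left _ (Set.mem_union_right _ hθ))
      have hBnφ : ¬ B ⊨ φ := by
        have := Theory.realize_sentence_of_mem (M := B) (V ∪ Ψ ∪ {Formula.not φ})
          (Set.mem_union_right _ rfl)
        rwa [Sentence.realize_not] at this
      -- the quantifier-free diagram of B
      set D : Set (L.Formula B) := {ρ | ρ.IsQF ∧ ρ.Realize (id : B → B)} with hD
      set T' : L[[B]].Theory :=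
        (L.lhomWithConstants B).onTheory (V ∪ {φ}) ∪ (Formula.equivSentence '' D) with hT'
      have hT'sat : T'.IsSatisfiable := by
        by_contra hns
        rw [Theory.isSatisfiable_iff_isFinitelySatisfiable, Theory.IsFinitelySatisfiable] at hns
        push_neg at hns
        obtain ⟨T0, hT0sub, hT0unsat⟩ := hns
        set D0 : Finset (L.Formula B) := (T0.filter (· ∈ Formula.equivSentence '' D)).preimage
            Formula.equivSentence (Formula.equivSentence.injective.injOn) with hD0
        have hmemD : ∀ ρ ∈ D0, ρ ∈ D ∧ Formula.equivSentence ρ ∈ T0 := by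
          intro ρ hρ
          rw [hD0, Finset.mem_preimage, Finset.mem_filter] at hρ
          obtain ⟨h1, ρ', hρ', he⟩ := hρ
          exact ⟨Formula.equivSentence.injective he ▸ hρ', h1⟩
        set θc : L.Formula B := D0.toList.foldr (· ⊓ ·) ⊤ with hθc
        have hθcQF : θc.IsQF :=
          foldr_inf_isQF _ (fun ρ hρ => ((hmemD ρ (Finset.mem_toList.1 hρ)).1).1)
        have hθcB : θc.Realize (id : B → B) :=
          (foldr_inf_realize _ _).2 (fun ρ hρ => ((hmemD ρ (Finset.mem_toList.1 hρ)).1).2)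
        -- no model of V ∪ {φ} realizes θc at any valuation
        have key : ∀ (M : Type (max u v)) [L.Structure M] [Nonempty M], M ⊨ V → M ⊨ φ →
            ∀ vv : B → M, ¬ θc.Realize vv := by
          intro M iM neM hMV hMφ vv hvv
          letI : (constantsOn B).Structure M := constantsOn.structure vv
          haveI : M ⊨ (V ∪ {φ} : L.Theory) := by
            rw [Theory.model_union_iff]
            exact ⟨hMV, Theory.model_singleton_iff.2 hMφ⟩
          haveI : M ⊨ (T0 : L[[B]].Theory) := by
            rw [Theory.model_iff]
            intro ψ hψ
            rcases hT0sub hψ with h | h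
            · haveI : M ⊨ (L.lhomWithConstants B).onTheory (V ∪ {φ}) :=
                ((L.lhomWithConstants B).onTheory_model (V ∪ {φ})).2 inferInstance
              exact Theory.realize_sentence_of_mem _ h
            · obtain ⟨ρ, hρD, rfl⟩ := h
              have hρD0 : ρ ∈ D0 := by
                rw [hD0, Finset.mem_preimage, Finset.mem_filter]
                exact ⟨hψ, ⟨ρ, hρD, rfl⟩⟩
              have hρv : ρ.Realize vv :=
                (foldr_inf_realize _ _).1 hvv ρ (Finset.mem_toList.2 hρD0)
              rw [Formula.realize_equivSentence]
              have hcon : (fun b => ((L.con b : M))) = vv := rfl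
              rw [hcon]
              exact hρv
          exact hT0unsat (Theory.Model.isSatisfiable M)
        -- package θc into a universal sentence over ∅
        set s : Finset B := θc.freeVarFinset with hs
        set nn : ℕ := s.card + 1 with hnn
        set idx : B → Fin nn := fun b =>
          if h : b ∈ s then Fin.castSucc (s.equivFin ⟨b, h⟩) else Fin.last _ with hidx
        set g : B → Empty ⊕ Fin nn := fun b => Sum.inr (idx b) with hg
        set Θ : L.Sentence := (BoundedFormula.relabel g (θc.not)).alls with hΘ
        have hΘmodels : Theory.ModelsBoundedFormula.{u, v, 0} (V ∪ {φ}) Θ := by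
          rw [Theory.models_sentence_iff]
          intro M
          have hMV : (M : Type (max u v)) ⊨ V := M.is_model.mono Set.subset_union_left
          have hMφ : (M : Type (max u v)) ⊨ φ :=
            Theory.realize_sentence_of_mem (V ∪ {φ}) (Set.mem_union_right _ rfl)
          refine (realize_relabel_alls θc nn idx (↑M)).2 fun xs hreal => ?_
          exact key M hMV hMφ _ hreal
        have hΘΨ : Θ ∈ Ψ :=
          ⟨⟨nn + 0, BoundedFormula.relabel g (θc.not), (hθcQF.not).relabel g, rfl⟩, hΘmodels⟩
        -- B satisfies Θ, contradicting that it realizes θc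
        have hBΘ : B ⊨ Θ := hBΨ Θ hΘΨ
        rw [realize_relabel_alls θc nn idx B] at hBΘ
        set ι : Fin (nn + 0) → B := fun i =>
          if h : (i : ℕ) < s.card then ((s.equivFin.symm ⟨(i : ℕ), h⟩ : s) : B)
          else Classical.arbitrary B with hι
        refine hBΘ ι ?_
        have hagree : ∀ b ∈ θc.freeVarFinset, ι (Fin.castAdd 0 (idx b)) = (id : B → B) b := by
          intro b hb
          have hbs : b ∈ s := hb
          have h1 : idx b = Fin.castSucc (s.equivFin ⟨b, hbs⟩) := by rw [hidx]; exact dif_pos hbs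
          have h2 : ((Fin.castAdd 0 (idx b) : Fin (nn + 0)) : ℕ) = (s.equivFin ⟨b, hbs⟩ : ℕ) := by
            rw [h1]; rfl
          simp only [hι]
          have h3 : ((Fin.castAdd 0 (idx b) : Fin (nn + 0)) : ℕ) < s.card := by
            rw [h2]; exact (s.equivFin ⟨b, hbs⟩).2
          rw [dif_pos h3]
          have h4 : (⟨((Fin.castAdd 0 (idx b) : Fin (nn + 0)) : ℕ), h3⟩ : Fin s.card)
              = s.equivFin ⟨b, hbs⟩ := by
            apply Fin.ext; rw [h2]
          rw [h4, Equiv.symm_apply_apply]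
          rfl
        exact (formula_realize_congr (fun a ha => (hagree a ha))).2 hθcB
      -- a model of the diagram together with V ∪ {φ}
      have hcardB : (L[[B]]).card ≤ ℵ₀ := by
        rw [card_withConstants]
        refine add_le_aleph0.2 ⟨?_, ?_⟩
        · exact (lift_le.2 hLcard).trans (by simp)
        · exact (lift_le.2 (mk_le_aleph0)).trans (by simp)
      obtain ⟨A, iA, neA, cntA, hAmod⟩ := exists_model_in_universe.{w} hcardB hT'sat
      haveI : A ⊨ T' := hAmod
      letI iAL : L.Structure A := (L.lhomWithConstants B).reduct A
      haveI hexp : (L.lhomWithConstants B).IsExpansionOn A :=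
        LHom.isExpansionOn_reduct (L.lhomWithConstants B) A
      haveI hAVφ : A ⊨ (V ∪ {φ} : L.Theory) :=
        ((L.lhomWithConstants B).onTheory_model (V ∪ {φ})).1 (hAmod.mono Set.subset_union_left)
      have hAV : A ⊨ V := hAVφ.mono Set.subset_union_left
      have hAφ : A ⊨ φ := Theory.realize_sentence_of_mem (V ∪ {φ}) (Set.mem_union_right _ rfl)
      -- transfer of quantifier-free facts from B to A
      set c : B → A := fun b => ((L.con b : A)) with hc
      have hdiag : ∀ ρ : L.Formula B, ρ ∈ D → ρ.Realize c := by
        intro ρ hρ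
        have : A ⊨ Formula.equivSentence ρ :=
          Theory.realize_sentence_of_mem T' (Set.mem_union_right _ ⟨ρ, hρ, rfl⟩)
        rwa [Formula.realize_equivSentence] at this
      have htrans : ∀ ρ : L.Formula B, ρ.IsQF → ρ.Realize (id : B → B) → ρ.Realize c :=
        fun ρ hρQF hρ => hdiag ρ ⟨hρQF, hρ⟩
      -- build the embedding of B into A
      have hinj : Function.Injective c := by
        intro b b' hbb
        by_contra hne
        have h1 : (((Term.var b : L.Term B).equal (Term.var b')).not).Realize (id : B → B) := hne
        have h2 := htrans _ ((IsAtomic.equal _ _).isQF.not) h1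
        exact h2 hbb
      have hfun : ∀ {k : ℕ} (F : L.Functions k) (x : Fin k → B),
          c (funMap F x) = funMap F (c ∘ x) := by
        intro k F x
        have h1 : (((Term.func F (fun i => Term.var (x i)) : L.Term B).equal
            (Term.var (funMap F x)))).Realize (id : B → B) := rfl
        have h2 := htrans _ ((IsAtomic.equal _ _).isQF) h1
        exact (show funMap F (c ∘ x) = c (funMap F x) from h2).symm
      have hrel : ∀ {k : ℕ} (r : L.Relations k) (x : Fin k → B),
          RelMap r (c ∘ x) ↔ RelMap r x := by
        intro k r x
        constructor
        · intro h
          by_contra hn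
          have h1 : ((r.formula (fun i => Term.var (x i))).not).Realize (id : B → B) := hn
          have h2 := htrans _ ((IsAtomic.rel _ _).isQF.not) h1
          exact h2 h
        · intro h
          have h1 : ((r.formula (fun i => Term.var (x i)))).Realize (id : B → B) := h
          exact htrans _ ((IsAtomic.rel _ _).isQF) h1
      set f : B ↪[L] A := ⟨⟨c, hinj⟩, fun {k} F x => hfun F x, fun {k} r x => hrel r x⟩ with hf
      set Nr : L.Substructure A := f.toHom.range with hNr
      have g' : B ≃[L] Nr := f.equivRange
      haveI : Nonempty Nr := Nonempty.map g' neB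
      haveI hNrV : (Nr : Type w) ⊨ V := StrongHomClass.theory_model g'
      have hNrne : ((Nr : L.Substructure A) : Set A).Nonempty := by
        obtain ⟨b⟩ := neB
        exact ⟨c b, b, rfl⟩
      have hNrφ : (Nr : Type w) ⊨ φ := P A hAV hAφ Nr hNrne hNrV
      exact hBnφ ((StrongHomClass.realize_sentence g' φ).2 hNrφ)
    obtain ⟨T0, hT0sub, hT0models⟩ := Theory.models_iff_finset_models.1 step1
    set sΨ : Finset L.Sentence := T0.filter (· ∈ Ψ) with hsΨ
    have hcov : (T0 : L.Theory) ⊆ V ∪ ↑sΨ := by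
      intro θ hθ
      rcases hT0sub hθ with h | h
      · exact Set.mem_union_left _ h
      · exact Set.mem_union_right _ (by simpa [hsΨ] using Finset.mem_filter.2 ⟨hθ, h⟩)
    have hVsΨ : Theory.ModelsBoundedFormula.{u, v, 0} (V ∪ ↑sΨ) φ :=
      fun M vv xs => hT0models (M.subtheoryModel hcov) vv xs
    obtain ⟨n, χ, hχQF, hχiff⟩ := exists_universal_conj.{u, v, w} sΨ
      (fun θ hθ => ((Finset.mem_filter.1 hθ).2).1)
    refine ⟨n, χ, hχQF, fun M iM neM hMV => ⟨fun hMφ => ?_, fun hMχ => ?_⟩⟩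
    · rw [hχiff M]
      intro θ hθ
      haveI : M ⊨ (V ∪ {φ} : L.Theory) := by
        rw [Theory.model_union_iff]
        exact ⟨hMV, Theory.model_singleton_iff.2 hMφ⟩
      exact ((Finset.mem_filter.1 hθ).2).2.realize_sentence M
    · haveI : M ⊨ (V ∪ ↑sΨ : L.Theory) := by
        rw [Theory.model_union_iff]
        refine ⟨hMV, Theory.model_iff _ |>.2 fun θ hθ => ?_⟩
        exact (hχiff M).1 hMχ θ (by simpa using hθ)
      exact hVsΨ.realize_sentence M
  · rintro ⟨n, χ, hχQF, hiff⟩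
    intro M iM neM hMV hMφ N hNne hNV
    haveI : Nonempty N := hNne.to_subtype
    rw [hiff (N : Type w) hNV]
    have hM : M ⊨ χ.alls := (hiff M hMV).1 hMφ
    simp only [Sentence.Realize, realize_alls] at hM ⊢
    intro xs
    refine (hχQF.realize_embedding N.subtype).1 ?_
    have hd : (⇑N.subtype ∘ (default : Empty → N)) = (default : Empty → M) :=
      funext fun x => x.elim
    rw [hd]
    exact hM _



end GLTPaper
end

section
/- Easy direction of GLT(k) for extension closure: let τ be a finite first-order vocabulary, V an FO(τ) theory, and k a natural number. Every ∀^k∃* sentence, i.e., every prenex sentence of the form ∀x₁…∀x_k ∃y₁…∃y_n ψ with ψ quantifier-free, is k-extension closed modulo V: if a τ-structure 𝔄 satisfies V and has a k-ary cover all of whose members satisfy V and the sentence, then 𝔄 satisfies the sentence. -/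
open FirstOrder Language

universe u v w

namespace GLTPaper

variable {L : FirstOrder.Language.{u, v}}

/-- Existentially quantify over the last `n` free (de Bruijn) variables of a bounded formula,
leaving the first `k` variables free. -/
def exsFrom (k : ℕ) : ∀ {n : ℕ}, L.BoundedFormula Empty (k + n) → L.BoundedFormula Empty k
  | 0, ψ => ψ
  | _ + 1, ψ => exsFrom k ψ.ex

/-- The `∀^k∃*` sentence `∀x₁…∀x_k ∃y₁…∃y_n ψ` built from a quantifier-free matrix `ψ`. -/
def forallExistsSentence (k n : ℕ) (ψ : L.BoundedFormula Empty (k + n)) : L.Sentence :=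
  (exsFrom k ψ).alls

/-- A `k`-ary cover of a structure `M` is a nonempty collection of (nonempty) substructures
of `M` such that every set of at most `k` elements of `M` is contained in some member. -/
def IsKAryCover (k : ℕ) {M : Type w} [L.Structure M] (R : Set (L.Substructure M)) : Prop :=
  R.Nonempty ∧ (∀ N ∈ R, (N : Set M).Nonempty) ∧
    ∀ C : Finset M, C.card ≤ k → ∃ N ∈ R, (C : Set M) ⊆ (N : Set M)

lemma realize_exsFrom {M : Type w} [L.Structure M] (k : ℕ) :
    ∀ {n : ℕ} (ψ : L.BoundedFormula Empty (k + n)) (v : Empty → M) (xs : Fin k → M),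
      (exsFrom k ψ).Realize v xs ↔ ∃ ys : Fin n → M, ψ.Realize v (Fin.append xs ys)
  | 0, ψ, v, xs => by
    constructor
    · intro h
      refine ⟨Fin.elim0, ?_⟩
      convert h using 2
      all_goals first | rfl | (funext i; simp [Fin.append_elim0])
    · rintro ⟨ys, h⟩
      convert h using 2
      all_goals first | rfl | (funext i; rw [Subsingleton.elim ys Fin.elim0]; simp [Fin.append_elim0])
  | n + 1, ψ, v, xs => by
    rw [show exsFrom k ψ = exsFrom k ψ.ex from rfl, realize_exsFrom k ψ.ex v xs]
    constructor
    · rintro ⟨ys, h⟩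
      rw [BoundedFormula.realize_ex] at h
      obtain ⟨a, ha⟩ := h
      exact ⟨Fin.snoc ys a, by rwa [Fin.append_snoc]⟩
    · rintro ⟨ys, h⟩
      refine ⟨Fin.init ys, ?_⟩
      rw [BoundedFormula.realize_ex]
      refine ⟨ys (Fin.last n), ?_⟩
      rwa [← Fin.append_snoc, Fin.snoc_init_self]

/-- **Easy direction of `GLT(k)` for extension closure**: every `∀^k∃*` sentence
`∀x₁…∀x_k ∃y₁…∃y_n ψ` (with `ψ` quantifier-free) is `k`-extension closed modulo any theory
`V`: if a (nonempty) structure `M` satisfies `V` and has a `k`-ary cover all of whose members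
satisfy `V` and the sentence, then `M` satisfies the sentence. -/
theorem easy_direction_extension_closed (hfin : Finite L.Symbols) (V : L.Theory) (k n : ℕ)
    (ψ : L.BoundedFormula Empty (k + n)) (hψ : ψ.IsQF) :
    ∀ (M : Type w) [L.Structure M] [Nonempty M], M ⊨ V →
      ∀ R : Set (L.Substructure M), IsKAryCover k R →
        (∀ N ∈ R, (N : Type w) ⊨ V ∧ (N : Type w) ⊨ forallExistsSentence k n ψ) →
        M ⊨ forallExistsSentence k n ψ := by
  intro M _ _ _ R hR hmem
  classical
  obtain ⟨-, -, hcov⟩ := hR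
  have : (forallExistsSentence k n ψ).Realize M := by
    rw [forallExistsSentence, Sentence.Realize, BoundedFormula.realize_alls]
    intro xs
    rw [realize_exsFrom]
    -- find a member of the cover containing all xs i
    obtain ⟨N, hNR, hsub⟩ := hcov (Finset.image xs Finset.univ)
      (le_trans Finset.card_image_le (by simp))
    have hxs : ∀ i, xs i ∈ N := fun i => hsub (by simp)
    set xs' : Fin k → N := fun i => ⟨xs i, hxs i⟩ with hxs'
    have hN := (hmem N hNR).2
    rw [Sentence.Realize, forallExistsSentence, BoundedFormula.realize_alls] at hN
    have := hN xs'
    rw [realize_exsFrom] at this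
    obtain ⟨ys, hrel⟩ := this
    refine ⟨fun i => (ys i : M), ?_⟩
    have := (hψ.realize_embedding (N.subtype)
      (v := (default : Empty → N)) (xs := Fin.append xs' ys)).2 hrel
    have heq : (N.subtype : N → M) ∘ Fin.append xs' ys
        = Fin.append xs (fun i => (ys i : M)) := by
      funext i
      refine Fin.addCases (fun j => ?_) (fun j => ?_) i <;>
        simp [Function.comp, hxs']
    rw [heq] at this
    convert this using 2
  exact this

end GLTPaper
end

section
/- Strong failure of the Łoś–Tarski theorem in the finite: there exists a finite vocabulary τ (namely τ = {≤, S, P, c, d} with ≤ and S binary relation symbols, P a unary relation symbol, and c, d constant symbols) such that, letting 𝒮 be the class of all finite τ-structures, for each natural number k there is an FO(τ) sentence φ_k that is hereditary over 𝒮 (every substructure of a finite model of φ_k is again a model of φ_k) but is not equivalent over 𝒮 to any ∃^k∀* sentence, i.e., for every prenex sentence γ of the form ∃x₁…∃x_k ∀y₁…∀y_n ψ with ψ quantifier-free, there is a finite τ-structure satisfying exactly one of φ_k and γ. -/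
open FirstOrder Language

namespace LTFinite

/-- Relation symbols of the vocabulary `τ = {≤, S, P, c, d}`: binary `≤` and `S`, unary `P`. -/
inductive TauRel : ℕ → Type
  | le : TauRel 2
  | succ : TauRel 2
  | pelt : TauRel 1

/-- Function symbols of `τ`: the constant symbols `c` and `d`. -/
inductive TauFun : ℕ → Type
  | c : TauFun 0
  | d : TauFun 0

/-- The vocabulary `τ = {≤, S, P, c, d}` with binary relation symbols `≤` and `S`, a unary
relation symbol `P`, and constant symbols `c` and `d`. -/
def tau : FirstOrder.Language := ⟨TauFun, TauRel⟩

/-- Universally quantify over the last `n` free (de Bruijn) variables of a bounded formula,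
leaving the first `k` variables free. -/
def allsFrom (k : ℕ) : ∀ {n : ℕ}, tau.BoundedFormula Empty (k + n) → tau.BoundedFormula Empty k
  | 0, ψ => ψ
  | _ + 1, ψ => allsFrom k ψ.all

/-- The `∃^k∀*` sentence `∃x₁…∃x_k ∀y₁…∀y_n ψ` built from a quantifier-free matrix `ψ`. -/
def existsForallSentence (k n : ℕ) (ψ : tau.BoundedFormula Empty (k + n)) : tau.Sentence :=
  (allsFrom k ψ).exs

abbrev rle : tau.Relations 2 := TauRel.le
abbrev rsucc : tau.Relations 2 := TauRel.succ
abbrev rpelt : tau.Relations 1 := TauRel.pelt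
abbrev concon : tau.Constants := TauFun.c
abbrev dcon : tau.Constants := TauFun.d

def vt {l : ℕ} (i : Fin l) : tau.Term (Empty ⊕ Fin l) := Term.var (Sum.inr i)
def ct {l : ℕ} : tau.Term (Empty ⊕ Fin l) := Constants.term concon
def dt {l : ℕ} : tau.Term (Empty ⊕ Fin l) := Constants.term dcon

def leF {l : ℕ} (t₁ t₂ : tau.Term (Empty ⊕ Fin l)) : tau.BoundedFormula Empty l :=
  rle.boundedFormula₂ t₁ t₂
def succF {l : ℕ} (t₁ t₂ : tau.Term (Empty ⊕ Fin l)) : tau.BoundedFormula Empty l :=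
  rsucc.boundedFormula₂ t₁ t₂
def peltF {l : ℕ} (t : tau.Term (Empty ⊕ Fin l)) : tau.BoundedFormula Empty l :=
  rpelt.boundedFormula₁ t
def eqF {l : ℕ} (t₁ t₂ : tau.Term (Empty ⊕ Fin l)) : tau.BoundedFormula Empty l :=
  Term.bdEqual t₁ t₂

section semantics
variable {M : Type} [tau.Structure M]

def leM (a b : M) : Prop := Structure.RelMap (L := tau) rle ![a, b]
def succM (a b : M) : Prop := Structure.RelMap (L := tau) rsucc ![a, b]
def peltM (a : M) : Prop := Structure.RelMap (L := tau) rpelt ![a]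
def cM : M := constantMap (L := tau) concon
def dM : M := constantMap (L := tau) dcon

variable {l : ℕ} {v : Empty → M} {xs : Fin l → M}

@[simp] lemma realize_vt {i : Fin l} : (vt i).realize (Sum.elim v xs) = xs i := rfl
@[simp] lemma realize_ct : (ct (l := l)).realize (Sum.elim v xs) = cM := by
  simp [ct, cM, Term.realize_constants]
@[simp] lemma realize_dt : (dt (l := l)).realize (Sum.elim v xs) = dM := by
  simp [dt, dM, Term.realize_constants]

@[simp] lemma realize_leF {t₁ t₂} : (leF (l := l) t₁ t₂).Realize v xs ↔
    leM (t₁.realize (Sum.elim v xs)) (t₂.realize (Sum.elim v xs)) := by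
  rw [leF, BoundedFormula.realize_rel₂]; rfl
@[simp] lemma realize_succF {t₁ t₂} : (succF (l := l) t₁ t₂).Realize v xs ↔
    succM (t₁.realize (Sum.elim v xs)) (t₂.realize (Sum.elim v xs)) := by
  rw [succF, BoundedFormula.realize_rel₂]; rfl
@[simp] lemma realize_peltF {t} : (peltF (l := l) t).Realize v xs ↔
    peltM (t.realize (Sum.elim v xs)) := by
  rw [peltF, BoundedFormula.realize_rel₁]; rfl
@[simp] lemma realize_eqF {t₁ t₂} : (eqF (l := l) t₁ t₂).Realize v xs ↔
    (t₁.realize (Sum.elim v xs)) = (t₂.realize (Sum.elim v xs)) := by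
  rw [eqF, BoundedFormula.realize_bdEqual]

end semantics

/-! ### the sentences -/

def chiMatrix : tau.BoundedFormula Empty 3 :=
  (leF (vt 0) (vt 1) ⊔ leF (vt 1) (vt 0)) ⊓
  ((leF (vt 0) (vt 1) ⊓ leF (vt 1) (vt 0)) ⟹ eqF (vt 0) (vt 1)) ⊓
  ((leF (vt 0) (vt 1) ⊓ leF (vt 1) (vt 2)) ⟹ leF (vt 0) (vt 2)) ⊓
  leF ct (vt 0) ⊓ leF (vt 0) dt ⊓
  (succF (vt 0) (vt 1) ⟹
    (leF (vt 0) (vt 1) ⊓ ∼(eqF (vt 0) (vt 1)) ⊓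
      ((leF (vt 0) (vt 2) ⊓ leF (vt 2) (vt 1)) ⟹ (eqF (vt 2) (vt 0) ⊔ eqF (vt 2) (vt 1)))))

def chiS : tau.Sentence := chiMatrix.all.all.all

def ccS : tau.Sentence :=
  ((eqF (vt 0) dt) ⊔ (succF (vt (0 : Fin 2)) (vt 1)).ex).all

def andList {l : ℕ} : List (tau.BoundedFormula Empty l) → tau.BoundedFormula Empty l
  | [] => ⊤
  | f :: fs => f ⊓ andList fs

def gList (k : ℕ) : List (tau.BoundedFormula Empty (k+1)) :=
  ((List.finRange (k+1)).map fun i => peltF (vt i)) ++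
  (((List.finRange (k+1)).product (List.finRange (k+1))).filter (fun p => p.1 ≠ p.2)).map
    (fun p => ∼(eqF (vt p.1) (vt p.2)))

def gS (k : ℕ) : tau.Sentence := (andList (gList k)).exs

def phiS (k : ℕ) : tau.Sentence := chiS ⊓ (ccS ⟹ gS k)

/-! ### semantic characterizations -/

section sem
variable (M : Type) [tau.Structure M]

structure ChiSem : Prop where
  total : ∀ x y : M, leM x y ∨ leM y x
  antisymm : ∀ x y : M, leM x y → leM y x → x = y
  le_trans : ∀ x y z : M, leM x y → leM y z → leM x z
  cmin : ∀ x : M, leM cM x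
  dmax : ∀ x : M, leM x dM
  succ_ne : ∀ x y : M, succM x y → leM x y ∧ x ≠ y
  succ_imm : ∀ x y z : M, succM x y → leM x z → leM z y → z = x ∨ z = y

def CcSem : Prop := ∀ x : M, x = dM ∨ ∃ y : M, succM x y

def GSem (k : ℕ) : Prop :=
  ∃ xs : Fin (k+1) → M, (∀ i, peltM (xs i)) ∧ ∀ i j, i ≠ j → xs i ≠ xs j

lemma realize_chiS : M ⊨ chiS ↔ ChiSem M := by
  have : M ⊨ chiS ↔ ∀ x y z : M, chiMatrix.Realize (default : Empty → M)
      (Fin.snoc (Fin.snoc (Fin.snoc (default : Fin 0 → M) x) y) z) := by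
    simp [chiS, Sentence.Realize, Formula.Realize, BoundedFormula.realize_all]
  rw [this]
  simp only [chiMatrix, BoundedFormula.realize_inf, BoundedFormula.realize_imp,
    BoundedFormula.realize_sup, BoundedFormula.realize_not, realize_leF, realize_succF,
    realize_eqF, realize_vt, realize_ct, realize_dt]
  simp only [Fin.snoc]
  norm_num
  constructor
  · intro h
    refine ⟨fun x y => (h x y x).1.1.1.1.1, fun x y h1 h2 => (h x y x).1.1.1.1.2 h1 h2,
      fun x y z h1 h2 => (h x y z).1.1.1.2 h1 h2,
      fun x => (h x x x).1.1.2, fun x => (h x x x).1.2, ?_, ?_⟩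
    · intro x y hs
      exact ((h x y x).2 hs).1
    · intro x y z hs hxz hzy
      exact ((h x y z).2 hs).2 hxz hzy
  · rintro ⟨t, a, tr, cm, dm, sn, si⟩ x y z
    exact ⟨⟨⟨⟨⟨t x y, fun h1 h2 => a x y h1 h2⟩, fun h1 h2 => tr x y z h1 h2⟩, cm x⟩, dm x⟩,
      fun hs => ⟨sn x y hs, fun h1 h2 => si x y z hs h1 h2⟩⟩

lemma realize_ccS : M ⊨ ccS ↔ CcSem M := by
  have : M ⊨ ccS ↔ ∀ x : M, ((eqF (vt 0) dt) ⊔ (succF (vt (0 : Fin 2)) (vt 1)).ex).Realize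
      (default : Empty → M) (Fin.snoc (default : Fin 0 → M) x) := by
    simp [ccS, Sentence.Realize, Formula.Realize, BoundedFormula.realize_all]
  rw [this]
  simp only [BoundedFormula.realize_sup, BoundedFormula.realize_ex, realize_eqF, realize_succF,
    realize_vt, realize_dt]
  simp only [Fin.snoc, CcSem]
  norm_num

lemma realize_andList {l : ℕ} {v : Empty → M} {xs : Fin l → M}
    (L : List (tau.BoundedFormula Empty l)) :
    (andList L).Realize v xs ↔ ∀ f ∈ L, f.Realize v xs := by
  induction L with
  | nil => simp [andList]
  | cons f fs ih => simp [andList, BoundedFormula.realize_inf, ih]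

lemma realize_gS (k : ℕ) : M ⊨ gS k ↔ GSem M k := by
  have h0 : M ⊨ gS k ↔ ∃ xs : Fin (k+1) → M, (andList (gList k)).Realize default xs :=
    BoundedFormula.realize_exs
  rw [h0]
  constructor
  · rintro ⟨xs, hxs⟩
    rw [realize_andList] at hxs
    refine ⟨xs, fun i => ?_, fun i j hij => ?_⟩
    · have := hxs (peltF (vt i)) (by simp [gList])
      simpa using this
    · have := hxs (∼(eqF (vt i) (vt j))) ?_
      · simpa using this
      · simp only [gList, List.mem_append, List.mem_map, List.mem_filter]
        refine Or.inr ⟨⟨i, j⟩, ?_, rfl⟩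
        simp [List.pair_mem_product, hij]
  · rintro ⟨xs, h1, h2⟩
    refine ⟨xs, ?_⟩
    rw [realize_andList]
    intro f hf
    simp only [gList, List.mem_append, List.mem_map, List.mem_filter] at hf
    rcases hf with ⟨i, _, rfl⟩ | ⟨⟨i, j⟩, hij, rfl⟩
    · simpa using h1 i
    · simp only [List.pair_mem_product, decide_eq_true_eq] at hij
      simpa using h2 i j (by simpa using hij.2)

lemma realize_phiS (k : ℕ) : M ⊨ phiS k ↔ (ChiSem M ∧ (CcSem M → GSem M k)) := by
  have : M ⊨ phiS k ↔ (M ⊨ chiS ∧ (M ⊨ ccS → M ⊨ gS k)) := by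
    simp [phiS, Sentence.Realize, Formula.Realize, BoundedFormula.realize_inf,
      BoundedFormula.realize_imp]
  rw [this, realize_chiS, realize_ccS, realize_gS]

end sem

/-! ### substructure transfer -/

section sub
variable {M : Type} [tau.Structure M] {N : tau.Substructure M}

lemma sub_leM (a b : N) : leM a b ↔ leM (a : M) (b : M) := by
  have h0 : Structure.RelMap (L := tau) (M := N) rle ![a, b] ↔
      Structure.RelMap (L := tau) (M := M) rle (fun i => ((![a, b] i : N) : M)) := Iff.rfl
  have h1 : (fun i => ((![a, b] i : N) : M)) = ![(a : M), (b : M)] := by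
    funext i; fin_cases i <;> rfl
  rw [leM, leM, h0, h1]

lemma sub_succM (a b : N) : succM a b ↔ succM (a : M) (b : M) := by
  have h0 : Structure.RelMap (L := tau) (M := N) rsucc ![a, b] ↔
      Structure.RelMap (L := tau) (M := M) rsucc (fun i => ((![a, b] i : N) : M)) := Iff.rfl
  have h1 : (fun i => ((![a, b] i : N) : M)) = ![(a : M), (b : M)] := by
    funext i; fin_cases i <;> rfl
  rw [succM, succM, h0, h1]

lemma sub_peltM (a : N) : peltM a ↔ peltM (a : M) := by
  have h0 : Structure.RelMap (L := tau) (M := N) rpelt ![a] ↔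
      Structure.RelMap (L := tau) (M := M) rpelt (fun i => ((![a] i : N) : M)) := Iff.rfl
  have h1 : (fun i => ((![a] i : N) : M)) = ![(a : M)] := by
    funext i; fin_cases i <;> rfl
  rw [peltM, peltM, h0, h1]

lemma sub_cM : ((cM : N) : M) = cM := by
  show ((Structure.funMap (L := tau) concon default : N) : M) = _
  show Structure.funMap _ _ = _
  exact congrArg (Structure.funMap concon) (funext fun i => i.elim0)

lemma sub_dM : ((dM : N) : M) = dM := by
  show ((Structure.funMap (L := tau) dcon default : N) : M) = _
  show Structure.funMap _ _ = _
  exact congrArg (Structure.funMap dcon) (funext fun i => i.elim0)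

lemma cM_mem : (cM : M) ∈ N := by
  have := N.constants_mem concon
  exact this

lemma dM_mem : (dM : M) ∈ N := by
  have := N.constants_mem dcon
  exact this

end sub

/-! ### finite extremal elements -/

section extremal
variable {M : Type} [tau.Structure M]

lemma finset_least (hchi : ChiSem M) (t : Finset M) (ht : t.Nonempty) :
    ∃ a ∈ t, ∀ b ∈ t, leM a b := by
  classical
  induction t using Finset.induction_on with
  | empty => exact absurd ht (by simp)
  | @insert x s hx ih =>
    rcases s.eq_empty_or_nonempty with rfl | hs
    · refine ⟨x, by simp, ?_⟩
      intro b hb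
      simp only [Finset.mem_insert, Finset.notMem_empty, or_false] at hb
      subst hb
      rcases hchi.total b b with h | h <;> exact h
    · obtain ⟨a, ha, hleast⟩ := ih hs
      rcases hchi.total x a with h | h
      · refine ⟨x, by simp, ?_⟩
        intro b hb
        rcases Finset.mem_insert.1 hb with rfl | hb
        · rcases hchi.total b b with h' | h' <;> exact h'
        · exact hchi.le_trans x a b h (hleast b hb)
      · refine ⟨a, by simp [ha], ?_⟩
        intro b hb
        rcases Finset.mem_insert.1 hb with rfl | hb
        · exact h
        · exact hleast b hb

lemma finset_greatest (hchi : ChiSem M) (t : Finset M) (ht : t.Nonempty) :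
    ∃ a ∈ t, ∀ b ∈ t, leM b a := by
  classical
  induction t using Finset.induction_on with
  | empty => exact absurd ht (by simp)
  | @insert x s hx ih =>
    rcases s.eq_empty_or_nonempty with rfl | hs
    · refine ⟨x, by simp, ?_⟩
      intro b hb
      simp only [Finset.mem_insert, Finset.notMem_empty, or_false] at hb
      subst hb
      rcases hchi.total b b with h | h <;> exact h
    · obtain ⟨a, ha, hg⟩ := ih hs
      rcases hchi.total x a with h | h
      · refine ⟨a, by simp [ha], ?_⟩
        intro b hb
        rcases Finset.mem_insert.1 hb with rfl | hb
        · exact h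
        · exact hg b hb
      · refine ⟨x, by simp, ?_⟩
        intro b hb
        rcases Finset.mem_insert.1 hb with rfl | hb
        · rcases hchi.total b b with h' | h' <;> exact h'
        · exact hchi.le_trans b a x (hg b hb) h

lemma set_least [Finite M] (hchi : ChiSem M) (s : Set M) (hs : s.Nonempty) :
    ∃ a ∈ s, ∀ b ∈ s, leM a b := by
  obtain ⟨a, ha, h⟩ := finset_least hchi s.toFinite.toFinset (by simpa using hs)
  exact ⟨a, by simpa using ha, fun b hb => h b (by simpa using hb)⟩

lemma set_greatest [Finite M] (hchi : ChiSem M) (s : Set M) (hs : s.Nonempty) :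
    ∃ a ∈ s, ∀ b ∈ s, leM b a := by
  obtain ⟨a, ha, h⟩ := finset_greatest hchi s.toFinite.toFinset (by simpa using hs)
  exact ⟨a, by simpa using ha, fun b hb => h b (by simpa using hb)⟩

end extremal

/-! ### the collapse lemma -/

lemma collapse {M : Type} [tau.Structure M] [Finite M] (hchi : ChiSem M)
    (N : tau.Substructure M)
    (hcc : ∀ x : M, x ∈ N → (x = dM ∨ ∃ y : M, y ∈ N ∧ succM x y)) :
    ∀ a : M, a ∈ N := by
  by_contra hna
  push_neg at hna
  obtain ⟨a, ha, hamin⟩ := set_least hchi {a : M | a ∉ N} hna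
  have haN : a ∉ N := ha
  set B : Set M := {z : M | z ∈ N ∧ leM z a ∧ z ≠ a} with hB
  have hcB : (cM : M) ∈ B := by
    refine ⟨cM_mem, hchi.cmin a, ?_⟩
    intro h
    exact haN (h ▸ cM_mem)
  obtain ⟨u, huB, hug⟩ := set_greatest hchi B ⟨_, hcB⟩
  obtain ⟨huN, hua, huna⟩ := huB
  rcases hcc u huN with rfl | ⟨v, hvN, hsucc⟩
  · exact huna (hchi.antisymm _ a hua (hchi.dmax a))
  · obtain ⟨huv, hunv⟩ := hchi.succ_ne u v hsucc
    rcases hchi.total v a with hva | hav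
    · have hvne : v ≠ a := fun h => haN (h ▸ hvN)
      have : v ∈ B := ⟨hvN, hva, hvne⟩
      exact hunv (hchi.antisymm u v huv (hug v this))
    · rcases hchi.succ_imm u v a hsucc hua hav with rfl | rfl
      · exact haN huN
      · exact haN hvN

/-! ### hereditariness -/

theorem phiS_hereditary (k : ℕ) (M : Type) [tau.Structure M] [Finite M]
    (hM : M ⊨ phiS k) (N : tau.Substructure M) : (N : Type) ⊨ phiS k := by
  rw [realize_phiS] at hM ⊢
  obtain ⟨hchi, himp⟩ := hM
  constructor
  · constructor
    · intro x y
      rcases hchi.total (x : M) (y : M) with h | h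
      · exact Or.inl ((sub_leM x y).2 h)
      · exact Or.inr ((sub_leM y x).2 h)
    · intro x y h1 h2
      exact Subtype.ext (hchi.antisymm _ _ ((sub_leM x y).1 h1) ((sub_leM y x).1 h2))
    · intro x y z h1 h2
      exact (sub_leM x z).2 (hchi.le_trans _ _ _ ((sub_leM x y).1 h1) ((sub_leM y z).1 h2))
    · intro x
      have := hchi.cmin (x : M)
      rw [← sub_cM] at this
      exact (sub_leM _ _).2 this
    · intro x
      have := hchi.dmax (x : M)
      rw [← sub_dM] at this
      exact (sub_leM _ _).2 this
    · intro x y hs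
      obtain ⟨h1, h2⟩ := hchi.succ_ne _ _ ((sub_succM x y).1 hs)
      exact ⟨(sub_leM x y).2 h1, fun h => h2 (congrArg _ h)⟩
    · intro x y z hs h1 h2
      rcases hchi.succ_imm _ _ _ ((sub_succM x y).1 hs) ((sub_leM x z).1 h1)
        ((sub_leM z y).1 h2) with h | h
      · exact Or.inl (Subtype.ext h)
      · exact Or.inr (Subtype.ext h)
  · intro hccN
    have hallN : ∀ a : M, a ∈ N := by
      refine collapse hchi N ?_
      intro x hx
      rcases hccN ⟨x, hx⟩ with h | ⟨y, hy⟩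
      · left
        have := congrArg (Subtype.val) h
        rwa [sub_dM] at this
      · exact Or.inr ⟨(y : M), y.2, (sub_succM _ _).1 hy⟩
    have hccM : CcSem M := by
      intro x
      rcases hccN ⟨x, hallN x⟩ with h | ⟨y, hy⟩
      · left
        have := congrArg (Subtype.val) h
        rwa [sub_dM] at this
      · exact Or.inr ⟨(y : M), (sub_succM _ _).1 hy⟩
    obtain ⟨xs, hP, hinj⟩ := himp hccM
    refine ⟨fun i => ⟨xs i, hallN _⟩, fun i => ?_, fun i j hij h => ?_⟩
    · exact (sub_peltM _).2 (hP i)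
    · exact hinj i j hij (congrArg Subtype.val h)

/-! ### concrete chain structures -/

def chainS (m : ℕ) (T : Set ℕ) : tau.Structure (Fin (m+1)) where
  funMap := fun {n} f => match f with
    | TauFun.c => fun _ => ⟨0, Nat.succ_pos m⟩
    | TauFun.d => fun _ => Fin.last m
  RelMap := fun {n} r => match r with
    | TauRel.le => fun v => (v 0).val ≤ (v 1).val
    | TauRel.succ => fun v => (v 1).val = (v 0).val + 1
    | TauRel.pelt => fun v => (v 0).val ∈ T

section chain
variable {m : ℕ} {T : Set ℕ}

lemma chain_leM (a b : Fin (m+1)) : @leM (Fin (m+1)) (chainS m T) a b ↔ a.val ≤ b.val :=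
  Iff.rfl

lemma chain_succM (a b : Fin (m+1)) :
    @succM (Fin (m+1)) (chainS m T) a b ↔ b.val = a.val + 1 := Iff.rfl

lemma chain_peltM (a : Fin (m+1)) : @peltM (Fin (m+1)) (chainS m T) a ↔ a.val ∈ T := Iff.rfl

lemma chain_cM : (@cM (Fin (m+1)) (chainS m T)) = ⟨0, Nat.succ_pos m⟩ := rfl

lemma chain_dM : (@dM (Fin (m+1)) (chainS m T)) = Fin.last m := rfl

lemma chain_chiSem : @ChiSem (Fin (m+1)) (chainS m T) := by
  letI := chainS m T
  refine ⟨?_, ?_, ?_, ?_, ?_, ?_, ?_⟩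
  · intro x y
    rw [chain_leM, chain_leM]
    omega
  · intro x y h1 h2
    rw [chain_leM] at h1 h2
    exact Fin.ext (by omega)
  · intro x y z h1 h2
    rw [chain_leM] at h1 h2 ⊢
    omega
  · intro x
    rw [chain_cM, chain_leM]
    simp
  · intro x
    rw [chain_dM, chain_leM]
    simp [Fin.le_last, Fin.is_le]
  · intro x y h
    rw [chain_succM] at h
    rw [chain_leM]
    constructor
    · omega
    · intro he
      rw [he] at h
      omega
  · intro x y z h h1 h2
    rw [chain_succM] at h
    rw [chain_leM] at h1 h2
    rcases Nat.lt_or_ge z.val (x.val + 1) with hz | hz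
    · left; exact Fin.ext (by omega)
    · right; exact Fin.ext (by omega)

lemma chain_ccSem : @CcSem (Fin (m+1)) (chainS m T) := by
  letI := chainS m T
  intro x
  rcases Nat.lt_or_ge x.val m with hx | hx
  · right
    exact ⟨⟨x.val + 1, by omega⟩, by rw [chain_succM]⟩
  · left
    rw [chain_dM]
    exact Fin.ext (by simpa [Fin.last] using Nat.le_antisymm (Nat.le_of_lt_succ x.isLt) hx)

end chain

/-! ### quantifier-free transfer -/

section transfer
variable {M N : Type} [tau.Structure M] [tau.Structure N] (h : M → N) {l : ℕ}
  (xs : Fin l → M) (S : Set M)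

lemma term_transfer (hS : ∀ i, xs i ∈ S) (hcS : (cM : M) ∈ S) (hdS : (dM : M) ∈ S)
    (hc : h cM = cM) (hd : h dM = dM) (t : tau.Term (Empty ⊕ Fin l)) :
    h (t.realize (Sum.elim (default : Empty → M) xs)) =
      t.realize (Sum.elim (default : Empty → N) (h ∘ xs)) ∧
    t.realize (Sum.elim (default : Empty → M) xs) ∈ S := by
  induction t with
  | var i =>
    rcases i with e | i
    · exact e.elim
    · exact ⟨rfl, hS i⟩
  | func f ts ih =>
    cases f with
    | c =>
      have hM : Term.realize (Sum.elim (default : Empty → M) xs) (Term.func TauFun.c ts)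
          = (cM : M) := by
        exact congrArg _ (funext fun i => i.elim0)
      have hN : Term.realize (Sum.elim (default : Empty → N) (h ∘ xs)) (Term.func TauFun.c
          (fun i => ts i)) = (cM : N) := by
        exact congrArg _ (funext fun i => i.elim0)
      rw [hM, hN]
      exact ⟨hc, hcS⟩
    | d =>
      have hM : Term.realize (Sum.elim (default : Empty → M) xs) (Term.func TauFun.d ts)
          = (dM : M) := by
        exact congrArg _ (funext fun i => i.elim0)
      have hN : Term.realize (Sum.elim (default : Empty → N) (h ∘ xs)) (Term.func TauFun.d
          (fun i => ts i)) = (dM : N) := by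
        exact congrArg _ (funext fun i => i.elim0)
      rw [hM, hN]
      exact ⟨hd, hdS⟩

lemma qf_transfer (hS : ∀ i, xs i ∈ S) (hcS : (cM : M) ∈ S) (hdS : (dM : M) ∈ S)
    (hc : h cM = cM) (hd : h dM = dM)
    (hinj : ∀ a ∈ S, ∀ b ∈ S, (h a = h b ↔ a = b))
    (hrel : ∀ (nn : ℕ) (r : tau.Relations nn) (v : Fin nn → M), (∀ i, v i ∈ S) →
      (Structure.RelMap r v ↔ Structure.RelMap r (h ∘ v)))
    (ψ : tau.BoundedFormula Empty l) (hqf : ψ.IsQF) :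
    ψ.Realize (default : Empty → M) xs ↔ ψ.Realize (default : Empty → N) (h ∘ xs) := by
  induction hqf with
  | falsum => exact Iff.rfl
  | of_isAtomic ha =>
    cases ha with
    | equal t₁ t₂ =>
      rw [BoundedFormula.realize_bdEqual, BoundedFormula.realize_bdEqual]
      obtain ⟨e₁, m₁⟩ := term_transfer h xs S hS hcS hdS hc hd t₁
      obtain ⟨e₂, m₂⟩ := term_transfer h xs S hS hcS hdS hc hd t₂
      rw [← e₁, ← e₂]
      exact (hinj _ m₁ _ m₂).symm
    | @rel nn R ts =>
      rw [BoundedFormula.realize_rel, BoundedFormula.realize_rel]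
      have hv : ∀ i, (ts i).realize (Sum.elim (default : Empty → M) xs) ∈ S :=
        fun i => (term_transfer h xs S hS hcS hdS hc hd (ts i)).2
      have := hrel nn R (fun i => (ts i).realize (Sum.elim (default : Empty → M) xs)) hv
      rw [this]
      constructor
      · intro hh
        convert hh using 1
        funext i
        exact ((term_transfer h xs S hS hcS hdS hc hd (ts i)).1).symm
      · intro hh
        convert hh using 1
        funext i
        exact (term_transfer h xs S hS hcS hdS hc hd (ts i)).1
  | imp h1 h2 ih1 ih2 =>
    rw [BoundedFormula.realize_imp, BoundedFormula.realize_imp, ih1, ih2]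

end transfer

/-! ### realization of the exists-forall sentences -/

lemma realize_allsFrom {M : Type} [tau.Structure M] (k : ℕ) :
    ∀ (n : ℕ) (ψ : tau.BoundedFormula Empty (k+n)) (xs : Fin k → M),
      (allsFrom k ψ).Realize (default : Empty → M) xs ↔
        ∀ ys : Fin n → M, ψ.Realize (default : Empty → M) (Fin.append xs ys) := by
  intro n
  induction n with
  | zero =>
    intro ψ xs
    have he : ∀ ys : Fin 0 → M, Fin.append xs ys = xs := by
      intro ys
      funext i
      rcases i with ⟨iv, hi⟩
      rw [Fin.append_right_nil xs ys rfl]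
      rfl
    constructor
    · intro hh ys
      rw [he ys]
      exact hh
    · intro hh
      have := hh (fun i => i.elim0)
      rwa [he] at this
  | succ n ih =>
    intro ψ xs
    rw [show allsFrom k ψ = allsFrom k ψ.all from rfl, ih ψ.all xs]
    constructor
    · intro hh ys
      have h1 := hh (Fin.init ys)
      rw [BoundedFormula.realize_all] at h1
      have h2 := h1 (ys (Fin.last n))
      rw [← Fin.append_snoc, Fin.snoc_init_self] at h2
      exact h2
    · intro hh ys
      rw [BoundedFormula.realize_all]
      intro a
      have := hh (Fin.snoc ys a)
      rwa [Fin.append_snoc] at this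

lemma realize_efs {M : Type} [tau.Structure M] (k n : ℕ) (ψ : tau.BoundedFormula Empty (k+n)) :
    M ⊨ existsForallSentence k n ψ ↔
      ∃ xs : Fin k → M, ∀ ys : Fin n → M,
        ψ.Realize (default : Empty → M) (Fin.append xs ys) := by
  rw [existsForallSentence]
  have h0 : M ⊨ (allsFrom k ψ).exs ↔
      ∃ xs : Fin k → M, (allsFrom k ψ).Realize (default : Empty → M) xs :=
    BoundedFormula.realize_exs
  rw [h0]
  exact exists_congr fun xs => realize_allsFrom k n ψ xs

/-! ### pigeonhole helpers -/

lemma pick_j (k D R : ℕ) (hD : D = 3*R) (hR : 1 ≤ R) (f : Fin k → ℕ) :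
    ∃ j : Fin (k+1), ∀ i, f i + R < (j.val+1)*D ∨ (j.val+1)*D + R < f i := by
  classical
  by_contra hno
  push_neg at hno
  choose g hg using hno
  have hginj : Function.Injective g := by
    intro j j' hjj
    by_contra hne
    obtain ⟨h1, h2⟩ := hg j
    obtain ⟨h3, h4⟩ := hg j'
    rw [hjj] at h1 h2
    have hsep : (j.val+1)*D + D ≤ (j'.val+1)*D ∨ (j'.val+1)*D + D ≤ (j.val+1)*D := by
      rcases Nat.lt_or_ge j.val j'.val with hlt | hge
      · left
        have : (j.val+1+1) ≤ (j'.val+1) := by omega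
        calc (j.val+1)*D + D = (j.val+1+1)*D := by ring
        _ ≤ (j'.val+1)*D := Nat.mul_le_mul_right D this
      · have hvne : j.val ≠ j'.val := fun hv => hne (Fin.ext hv)
        have : j'.val < j.val := by omega
        right
        have h5 : (j'.val+1+1) ≤ (j.val+1) := by omega
        calc (j'.val+1)*D + D = (j'.val+1+1)*D := by ring
        _ ≤ (j.val+1)*D := Nat.mul_le_mul_right D h5
    omega
  have hcard := Fintype.card_le_of_injective g hginj
  simp only [Fintype.card_fin] at hcard
  omega

lemma pick_scale (n t : ℕ) (g : Fin n → ℕ) :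
    ∃ L : ℕ, 4 ≤ L ∧ 4*L ≤ 4^(n+2) ∧
      ∀ i, ((g i) - t) + (t - (g i)) < L ∨ 4*L ≤ ((g i) - t) + (t - (g i)) := by
  classical
  have hfree : ∃ s ∈ Finset.Icc 1 (n+1),
      s ∉ (Finset.univ : Finset (Fin n)).image
        (fun i => Nat.log 4 (((g i) - t) + (t - (g i)))) := by
    by_contra hc
    push_neg at hc
    have hsub : Finset.Icc 1 (n+1) ⊆ (Finset.univ : Finset (Fin n)).image
        (fun i => Nat.log 4 (((g i) - t) + (t - (g i)))) := fun s hs => hc s hs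
    have h1 := Finset.card_le_card hsub
    have h2 : ((Finset.univ : Finset (Fin n)).image
        (fun i => Nat.log 4 (((g i) - t) + (t - (g i))))).card ≤ n :=
      le_trans (Finset.card_image_le) (by simp)
    rw [Nat.card_Icc] at h1
    omega
  obtain ⟨s, hs, hsbad⟩ := hfree
  obtain ⟨hs1, hs2⟩ := Finset.mem_Icc.1 hs
  have h4s : (4:ℕ) ≤ 4^s := by
    calc (4:ℕ) = 4^1 := by norm_num
    _ ≤ 4^s := Nat.pow_le_pow_right (by norm_num) hs1
  refine ⟨4^s, h4s, ?_, ?_⟩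
  · calc 4*4^s = 4^(s+1) := by ring
    _ ≤ 4^(n+2) := Nat.pow_le_pow_right (by norm_num) (by omega)
  · intro i
    by_contra hcon
    push_neg at hcon
    obtain ⟨h1, h2⟩ := hcon
    have hd0 : ((g i) - t) + (t - (g i)) ≠ 0 := by omega
    have hlog1 : s ≤ Nat.log 4 (((g i) - t) + (t - (g i))) :=
      (Nat.le_log_iff_pow_le (by norm_num) hd0).2 h1
    have hlog2 : Nat.log 4 (((g i) - t) + (t - (g i))) < s+1 := by
      have h2' : ((g i) - t) + (t - (g i)) < 4^(s+1) := by
        have hh : 4*4^s = 4^(s+1) := by ring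
        omega
      exact (Nat.log_lt_iff_lt_pow (by norm_num) hd0).2 h2'
    have heq : Nat.log 4 (((g i) - t) + (t - (g i))) = s := by omega
    exact hsbad (heq ▸ Finset.mem_image_of_mem _ (Finset.mem_univ i))

lemma tsep {k : ℕ} (D : ℕ) (i j : Fin (k+1)) (hne : i ≠ j) :
    (i.val+1)*D + D ≤ (j.val+1)*D ∨ (j.val+1)*D + D ≤ (i.val+1)*D := by
  rcases Nat.lt_or_ge i.val j.val with hlt | hge
  · left
    have h5 : (i.val+1+1) ≤ (j.val+1) := by omega
    calc (i.val+1)*D + D = (i.val+1+1)*D := by ring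
    _ ≤ (j.val+1)*D := Nat.mul_le_mul_right D h5
  · have hvne : i.val ≠ j.val := fun hv => hne (Fin.ext hv)
    have : j.val < i.val := by omega
    right
    have h5 : (j.val+1+1) ≤ (i.val+1) := by omega
    calc (j.val+1)*D + D = (j.val+1+1)*D := by ring
    _ ≤ (i.val+1)*D := Nat.mul_le_mul_right D h5

/-! ### the two concrete models -/

def TFset (k D : ℕ) : Set ℕ := {x | ∃ j : Fin (k+1), x = (j.val+1)*D}

def TMset (k D : ℕ) (j : Fin (k+1)) : Set ℕ :=
  {x | ∃ i : Fin (k+1), i ≠ j ∧ x = (i.val+1)*D}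

lemma chainF_phi (k D m : ℕ) (hD : 1 ≤ D) (hm : (k+1)*D ≤ m) :
    @Sentence.Realize tau (Fin (m+1)) (chainS m (TFset k D)) (phiS k) := by
  letI := chainS m (TFset k D)
  rw [realize_phiS]
  refine ⟨chain_chiSem, fun _ => ?_⟩
  refine ⟨fun j => ⟨(j.val+1)*D, ?_⟩, fun j => ?_, fun i j hij heq => ?_⟩
  · have h1 : (j.val+1)*D ≤ (k+1)*D := Nat.mul_le_mul_right D (by omega)
    omega
  · rw [chain_peltM]
    exact ⟨j, rfl⟩
  · have hv : (i.val+1)*D = (j.val+1)*D := congrArg Fin.val heq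
    rcases tsep D i j hij with h | h <;> omega

lemma chainM_not_phi (k D m : ℕ) (hD : 1 ≤ D) (j : Fin (k+1)) :
    ¬ @Sentence.Realize tau (Fin (m+1)) (chainS m (TMset k D j)) (phiS k) := by
  letI := chainS m (TMset k D j)
  rw [realize_phiS]
  rintro ⟨hchi, himp⟩
  obtain ⟨xs, hP, hinj⟩ := himp chain_ccSem
  have hsel : ∀ i : Fin (k+1), ∃ i' : Fin (k+1), i' ≠ j ∧ (xs i).val = (i'.val+1)*D := by
    intro i
    have := hP i
    rw [chain_peltM] at this
    exact this
  choose f hfne hfval using hsel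
  have hfinj : Function.Injective f := by
    intro a b hab
    by_contra hne
    have h1 : (xs a).val = (xs b).val := by rw [hfval a, hfval b, hab]
    exact hinj a b hne (Fin.ext h1)
  have hmem : ∀ i, f i ∈ Finset.univ.erase j :=
    fun i => Finset.mem_erase.2 ⟨hfne i, Finset.mem_univ _⟩
  have hcard := Finset.card_le_card_of_injOn (s := (Finset.univ : Finset (Fin (k+1))))
    (t := Finset.univ.erase j) f (fun i _ => hmem i) (fun a _ b _ h => hfinj h)
  rw [Finset.card_erase_of_mem (Finset.mem_univ j)] at hcard
  simp only [Finset.card_univ, Fintype.card_fin] at hcard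
  omega

/-! ### the main inequivalence lemma -/

lemma notEquiv (k n : ℕ) (ψ : tau.BoundedFormula Empty (k+n)) (hqf : ψ.IsQF) :
    ∃ (MM : Type) (inst : tau.Structure MM), Finite MM ∧ Nonempty MM ∧
      Xor' (@Sentence.Realize tau MM inst (phiS k))
        (@Sentence.Realize tau MM inst (existsForallSentence k n ψ)) := by
  by_contra hcon
  push_neg at hcon
  obtain ⟨R, hR⟩ : ∃ R : ℕ, R = 4^(n+2) := ⟨_, rfl⟩
  obtain ⟨D, hD⟩ : ∃ D : ℕ, D = 3*R := ⟨_, rfl⟩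
  obtain ⟨m, hm⟩ : ∃ m : ℕ, m = (k+2)*D := ⟨_, rfl⟩
  have hR1 : 1 ≤ R := by
    rw [hR]
    exact Nat.one_le_pow _ _ (by norm_num)
  have hD1 : 1 ≤ D := by omega
  have hkey : ∀ (inst : tau.Structure (Fin (m+1))),
      (@Sentence.Realize tau _ inst (phiS k) ↔
        @Sentence.Realize tau _ inst (existsForallSentence k n ψ)) := by
    intro inst
    have h1 := hcon (Fin (m+1)) inst (Finite.of_fintype _) inferInstance
    unfold Xor' at h1
    unfold Xor at h1
    tauto
  letI instF := chainS m (TFset k D)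
  have hFphi : @Sentence.Realize tau (Fin (m+1)) instF (phiS k) := by
    refine chainF_phi k D m hD1 ?_
    have h1 : (k+1)*D ≤ (k+2)*D := Nat.mul_le_mul_right D (by omega)
    omega
  obtain ⟨abar, hA⟩ := (@realize_efs (Fin (m+1)) instF k n ψ).1 ((hkey instF).1 hFphi)
  obtain ⟨j, hj⟩ := pick_j k D R hD hR1 (fun i => (abar i).val)
  obtain ⟨t, ht⟩ : ∃ t : ℕ, t = (j.val+1)*D := ⟨_, rfl⟩
  rw [← ht] at hj
  have hjk : j.val ≤ k := by omega
  have htlb : D ≤ t := by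
    have h1 : 1*D ≤ (j.val+1)*D := Nat.mul_le_mul_right D (by omega)
    omega
  have htub : t + D ≤ m := by
    have h1 : (j.val+1+1)*D ≤ (k+2)*D := Nat.mul_le_mul_right D (by omega)
    have h2 : (j.val+1)*D + D = (j.val+1+1)*D := by ring
    omega
  letI instM := chainS m (TMset k D j)
  have hMnphi := chainM_not_phi k D m hD1 j
  have hMgam : @Sentence.Realize tau (Fin (m+1)) instM (existsForallSentence k n ψ) := by
    refine (@realize_efs (Fin (m+1)) instM k n ψ).2 ⟨abar, ?_⟩
    intro cbar
    obtain ⟨L, hL4, hLR, hLs⟩ := pick_scale n t (fun i => (cbar i).val)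
    rw [← hR] at hLR
    have hbound : ∀ x : Fin (m+1), x.val < t + L → x.val + 2*L < m + 1 := by
      intro x hx
      omega
    set h : Fin (m+1) → Fin (m+1) :=
      fun x => if hx : t < x.val + L ∧ x.val < t + L then ⟨x.val + 2*L, hbound x hx.2⟩ else x
      with hh
    have hval : ∀ x : Fin (m+1),
        (h x).val = if t < x.val + L ∧ x.val < t + L then x.val + 2*L else x.val := by
      intro x
      by_cases hx : t < x.val + L ∧ x.val < t + L
      · simp only [hh, dif_pos hx, if_pos hx]
      · simp only [hh, dif_neg hx, if_neg hx]
    set SS : Set (Fin (m+1)) :=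
      {x | x.val + 4*L ≤ t ∨ (t < x.val + L ∧ x.val < t + L) ∨ t + 4*L ≤ x.val} with hSS
    have hSmem : ∀ x : Fin (m+1),
        x ∈ SS ↔ (x.val + 4*L ≤ t ∨ (t < x.val + L ∧ x.val < t + L) ∨ t + 4*L ≤ x.val) := by
      intro x
      rw [hSS]
      exact Iff.rfl
    have hSa : ∀ i, abar i ∈ SS := by
      intro i
      rw [hSmem]
      rcases hj i with h' | h'
      · left; omega
      · right; right; omega
    have hSc : ∀ i, cbar i ∈ SS := by
      intro i
      rw [hSmem]
      rcases hLs i with h' | h'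
      · right; left; omega
      · rcases Nat.lt_or_ge (cbar i).val t with hc | hc
        · left; omega
        · right; right; omega
    have hcMval : (@cM (Fin (m+1)) instM).val = 0 := by rw [chain_cM]
    have hdMval : (@dM (Fin (m+1)) instM).val = m := by rw [chain_dM]; rfl
    have hcMvalF : (@cM (Fin (m+1)) instF).val = 0 := by rw [chain_cM]
    have hdMvalF : (@dM (Fin (m+1)) instF).val = m := by rw [chain_dM]; rfl
    have hcS : (@cM (Fin (m+1)) instM) ∈ SS := by
      rw [hSmem, hcMval]
      left; omega
    have hdS : (@dM (Fin (m+1)) instM) ∈ SS := by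
      rw [hSmem, hdMval]
      right; right; omega
    have hc : h (@cM (Fin (m+1)) instM) = (@cM (Fin (m+1)) instF) := by
      apply Fin.ext
      rw [hval, hcMvalF, hcMval]
      rw [if_neg]
      omega
    have hd : h (@dM (Fin (m+1)) instM) = (@dM (Fin (m+1)) instF) := by
      apply Fin.ext
      rw [hval, hdMvalF, hdMval]
      rw [if_neg]
      omega
    have hS : ∀ i : Fin (k+n), Fin.append abar cbar i ∈ SS := by
      intro i
      refine Fin.addCases (fun i0 => ?_) (fun i1 => ?_) i
      · rw [Fin.append_left]
        exact hSa i0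
      · rw [Fin.append_right]
        exact hSc i1
    have hinj : ∀ a ∈ SS, ∀ b ∈ SS, (h a = h b ↔ a = b) := by
      intro a ha b hb
      rw [hSmem] at ha hb
      constructor
      · intro he
        have hv := congrArg Fin.val he
        rw [hval, hval] at hv
        apply Fin.ext
        split_ifs at hv <;> omega
      · intro he
        rw [he]
    have hrel : ∀ (nn : ℕ) (r : tau.Relations nn) (v : Fin nn → Fin (m+1)),
        (∀ i, v i ∈ SS) →
        (@Structure.RelMap tau (Fin (m+1)) instM nn r v ↔
          @Structure.RelMap tau (Fin (m+1)) instF nn r (h ∘ v)) := by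
      intro nn r v hv
      cases r with
      | le =>
        have h0 := hv 0
        have h1 := hv 1
        rw [hSmem] at h0 h1
        show (v 0).val ≤ (v 1).val ↔ (h (v 0)).val ≤ (h (v 1)).val
        rw [hval, hval]
        split_ifs <;> omega
      | succ =>
        have h0 := hv 0
        have h1 := hv 1
        rw [hSmem] at h0 h1
        show (v 1).val = (v 0).val + 1 ↔ (h (v 1)).val = (h (v 0)).val + 1
        rw [hval, hval]
        split_ifs <;> omega
      | pelt =>
        have h0 := hv 0
        rw [hSmem] at h0
        show (v 0).val ∈ TMset k D j ↔ (h (v 0)).val ∈ TFset k D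
        rw [hval]
        by_cases hmid : t < (v 0).val + L ∧ (v 0).val < t + L
        · rw [if_pos hmid]
          constructor
          · rintro ⟨i, hij, heq⟩
            rcases tsep D i j hij with hsep | hsep <;> omega
          · rintro ⟨i, heq⟩
            by_cases hijeq : i = j
            · subst hijeq
              omega
            · rcases tsep D i j hijeq with hsep | hsep <;> omega
        · rw [if_neg hmid]
          constructor
          · rintro ⟨i, hij, heq⟩
            exact ⟨i, heq⟩
          · rintro ⟨i, heq⟩
            refine ⟨i, ?_, heq⟩
            intro hijeq
            subst hijeq
            omega
    have htrans := @qf_transfer (Fin (m+1)) (Fin (m+1)) instM instF h (k+n)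
      (Fin.append abar cbar) SS hS hcS hdS hc hd hinj hrel ψ hqf
    have hcomp : h ∘ (Fin.append abar cbar) = Fin.append abar (h ∘ cbar) := by
      funext i
      refine Fin.addCases (fun i0 => ?_) (fun i1 => ?_) i
      · show h (Fin.append abar cbar (Fin.castAdd n i0)) =
          Fin.append abar (h ∘ cbar) (Fin.castAdd n i0)
        rw [Fin.append_left, Fin.append_left]
        apply Fin.ext
        rw [hval, if_neg]
        rcases hj i0 with h' | h' <;> omega
      · show h (Fin.append abar cbar (Fin.natAdd k i1)) =
          Fin.append abar (h ∘ cbar) (Fin.natAdd k i1)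
        rw [Fin.append_right, Fin.append_right]
        rfl
    rw [hcomp] at htrans
    exact htrans.2 (hA (h ∘ cbar))
  exact hMnphi ((hkey instM).2 hMgam)


/-- **Strong failure of the Łoś–Tarski theorem in the finite**: for the vocabulary
`τ = {≤, S, P, c, d}` and each `k`, there is an `FO(τ)` sentence `φ_k` that is hereditary
over the class of all finite `τ`-structures (every nonempty substructure of a finite model
of `φ_k` is again a model of `φ_k`), but that is not equivalent over this class to any
`∃^k∀*` sentence: for every such prenex sentence `γ` there is a finite `τ`-structure
satisfying exactly one of `φ_k` and `γ`. -/
theorem strong_failure_los_tarski_finite (k : ℕ) :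
    ∃ φ : tau.Sentence,
      (∀ (M : Type) [tau.Structure M] [Finite M] [Nonempty M], M ⊨ φ →
        ∀ N : tau.Substructure M, (N : Set M).Nonempty → (N : Type) ⊨ φ) ∧
      ∀ (n : ℕ) (ψ : tau.BoundedFormula Empty (k + n)), ψ.IsQF →
        ∃ (M : Type) (_ : tau.Structure M), Finite M ∧ Nonempty M ∧
          Xor' (M ⊨ φ) (M ⊨ existsForallSentence k n ψ) := by
  refine ⟨phiS k, ?_, ?_⟩
  · intro M _ _ _ hM N _
    exact phiS_hereditary k M hM N
  · intro n ψ hqf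
    exact notEquiv k n ψ hqf

end LTFinite
end
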